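/- If A is a closed game subset of an infinite compact topological group G, then every point of G is balanced for the tournament Â: for every x, x lies in the closure of Â°(x) = xA \ {x} and in the closure of (Â°)⁻¹(x). -/

import Mathlib

/-- Key lemma: for a "game subset" `B` of an infinite compact group, the
identity lies in the closure of `B \ {1}`. -/
lemma one_mem_closure_gameSubset {G : Type*} [Group G] [TopologicalSpace G]
    [IsTopologicalGroup G] [CompactSpace G] [Infinite G]
    (B : Set G) (hB : B ∩ B⁻¹ = {1}) (_hB' : B ∪ B⁻¹ = Set.univ) :
    (1 : G) ∈ closure (B \ {1}) := by
  by_contra h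
  rw [mem_closure_iff] at h
  push_neg at h
  obtain ⟨U, hUo, hU1, hUd⟩ := h
  -- U ∩ B ⊆ {1}
  have hUB : U ∩ B ⊆ {1} := by
    intro y ⟨hyU, hyB⟩
    by_contra hy1
    exact (Set.eq_empty_iff_forall_notMem.mp hUd y) ⟨hyU, hyB, hy1⟩
  -- Every element of U is in B⁻¹
  have hUBinv : U ⊆ B⁻¹ := by
    intro y hyU
    rcases Set.mem_union y B B⁻¹ |>.mp (by rw [_hB']; trivial) with hy | hy
    · have : y = 1 := hUB ⟨hyU, hy⟩
      subst this
      have : (1 : G) ∈ B ∩ B⁻¹ := by rw [hB]; rfl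
      exact this.2
    · exact hy
  -- V := U ∩ U⁻¹ is an open nbhd of 1 contained in B ∩ B⁻¹ = {1}
  have hVsub : U ∩ U⁻¹ ⊆ ({1} : Set G) := by
    intro y ⟨hy1, hy2⟩
    have h1 : y ∈ B⁻¹ := hUBinv hy1
    have h2 : y ∈ B := by
      have := hUBinv hy2
      simpa using this
    rw [← hB]; exact ⟨h2, h1⟩
  have hVmem : (1 : G) ∈ U ∩ U⁻¹ := ⟨hU1, by simpa using hU1⟩
  have hVopen : IsOpen (U ∩ U⁻¹) := hUo.inter (hUo.inv)
  have hsing : IsOpen ({1} : Set G) := by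
    have : U ∩ U⁻¹ = {1} := Set.Subset.antisymm hVsub (by
      intro y hy; rw [Set.mem_singleton_iff] at hy; subst hy; exact hVmem)
    rw [← this]; exact hVopen
  have : DiscreteTopology G := by
    rw [discreteTopology_iff_isOpen_singleton_one]
    exact hsing
  haveI : Finite G := finite_of_compact_of_discrete
  exact not_finite G

/-- The tournament of a closed game subset of an infinite compact topological group is
balanced: every point is in the closure of its outset and of its inset. -/
theorem closed_gameSubset_balanced {G : Type*} [Group G] [TopologicalSpace G]
    [IsTopologicalGroup G] [CompactSpace G] [T2Space G] [Infinite G]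
    (A : Set G) (hclosed : IsClosed A)
    (hA : A ∩ A⁻¹ = {1}) (hA' : A ∪ A⁻¹ = Set.univ) :
    ∀ x : G, x ∈ closure {y : G | x⁻¹ * y ∈ A ∧ x ≠ y} ∧
      x ∈ closure {y : G | y⁻¹ * x ∈ A ∧ y ≠ x} := by
  have hAinv : A⁻¹ ∩ (A⁻¹)⁻¹ = {1} := by
    rw [inv_inv, Set.inter_comm]; exact hA
  have hAinv' : A⁻¹ ∪ (A⁻¹)⁻¹ = Set.univ := by
    rw [inv_inv, Set.union_comm]; exact hA'
  have h1 := one_mem_closure_gameSubset A hA hA'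
  have h2 := one_mem_closure_gameSubset A⁻¹ hAinv hAinv'
  intro x
  have key : ∀ B : Set G, (1:G) ∈ closure (B \ {1}) →
      x ∈ closure ((fun y => x * y) '' (B \ {1})) := by
    intro B hB
    have := (Homeomorph.mulLeft x).image_closure (B \ {1})
    have h2 : closure ((fun y => x * y) '' (B \ {1})) =
        ⇑(Homeomorph.mulLeft x) '' closure (B \ {1}) := by
      rw [this]; rfl
    rw [h2]
    exact ⟨1, hB, mul_one x⟩
  constructor
  · have hset : {y : G | x⁻¹ * y ∈ A ∧ x ≠ y} = (fun y => x * y) '' (A \ {1}) := by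
      ext y
      constructor
      · rintro ⟨h1, h2⟩
        exact ⟨x⁻¹ * y, ⟨h1, by
          simp only [Set.mem_singleton_iff]
          intro hc
          exact h2 (inv_mul_eq_one.mp hc)⟩,
          by group⟩
      · rintro ⟨a, ⟨ha, ha1⟩, rfl⟩
        refine ⟨by simpa using ha, ?_⟩
        intro hc
        exact ha1 (by simpa using hc.symm)
    rw [hset]
    exact key A h1
  · have hset : {y : G | y⁻¹ * x ∈ A ∧ y ≠ x} = (fun y => x * y) '' (A⁻¹ \ {1}) := by
      ext y
      constructor
      · rintro ⟨h1, h2⟩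
        refine ⟨x⁻¹ * y, ⟨?_, ?_⟩, by group⟩
        · simp only [Set.mem_inv]
          have : (x⁻¹ * y)⁻¹ = y⁻¹ * x := by group
          rw [this]; exact h1
        · simp only [Set.mem_singleton_iff]
          intro hc
          exact h2 (by rw [inv_mul_eq_one] at hc; exact hc.symm)
      · rintro ⟨a, ⟨ha, ha1⟩, rfl⟩
        constructor
        · have : ((x * a))⁻¹ * x = a⁻¹ := by group
          rw [this]
          simpa using ha
        · intro hc
          exact ha1 (by simpa using hc)
    rw [hset]
    exact key A⁻¹ h2
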